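/- Let S be a dense subsemigroup of ((0,∞),+) and A ⊆ S. Then A is a C-set near zero if and only if there exists a dynamical system (X, ⟨T_s⟩_{s∈S}), points x, y ∈ X forming a JIAUR₀ pair, and a neighborhood U of y with A = {s ∈ S : T_s(x) ∈ U}. -/

import Mathlib

open Filter Topology Set

noncomputable section

/-- The extension of `+` on a discrete semigroup to its Stone–Čech compactification
(space of ultrafilters): `A ∈ p + q` iff `{x : -x + A ∈ q} ∈ p`. -/
def uadd {α : Type} [Add α] (p q : Ultrafilter α) : Ultrafilter α :=
  p.bind fun a => q.map (a + ·)

/-- `O⁺(S) = {p ∈ βS : for all ε > 0, S ∩ (0,ε) ∈ p}`. -/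
def Oplus (S : AddSubsemigroup ℝ) : Set (Ultrafilter S) :=
  {p | ∀ ε : ℝ, 0 < ε → {x : S | (x : ℝ) < ε} ∈ p}

def IsLeftIdealIn {α : Type} [Add α] (T L : Set (Ultrafilter α)) : Prop :=
  L.Nonempty ∧ L ⊆ T ∧ ∀ p ∈ T, ∀ q ∈ L, uadd p q ∈ L

def IsMinimalLeftIdealIn {α : Type} [Add α] (T L : Set (Ultrafilter α)) : Prop :=
  IsLeftIdealIn T L ∧ ∀ L', IsLeftIdealIn T L' → L' ⊆ L → L' = L

/-- The smallest ideal `K(O⁺(S))`, described as the union of all minimal left ideals. -/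
def KOplus (S : AddSubsemigroup ℝ) : Set (Ultrafilter S) :=
  {p | ∃ L, IsMinimalLeftIdealIn (Oplus S) L ∧ p ∈ L}

/-- A dynamical system over an additive semigroup. -/
structure DynSys (σ : Type) [Add σ] where
  X : Type
  [ts : TopologicalSpace X]
  [cs : CompactSpace X]
  [t2 : T2Space X]
  T : σ → X → X
  cont : ∀ s, Continuous (T s)
  comp : ∀ s t, T s ∘ T t = T (s + t)

attribute [instance] DynSys.ts DynSys.cs DynSys.t2

/-- `T_p(x) = p-lim_{s ∈ S} T_s(x)`. -/
def DynSys.Tp {σ : Type} [Add σ] (D : DynSys σ) (p : Ultrafilter σ) (x : D.X) : D.X :=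
  (p.map fun s => D.T s x).lim

/-- `B` is syndetic near zero. -/
def syndeticNearZero (S : AddSubsemigroup ℝ) (A : Set S) : Prop :=
  ∀ ε : ℝ, 0 < ε → ∃ F : Finset S, F.Nonempty ∧ (∀ t ∈ F, (t : ℝ) < ε) ∧
    ∃ δ : ℝ, 0 < δ ∧ ∀ s : S, (s : ℝ) < δ → ∃ t ∈ F, t + s ∈ A

def uniformlyRecurrentNearZero (S : AddSubsemigroup ℝ) (D : DynSys S) (x : D.X) : Prop :=
  ∀ W ∈ nhds x, syndeticNearZero S {s : S | D.T s x ∈ W}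

/-- `x` and `y` are proximal near zero. -/
def proximalNearZero (S : AddSubsemigroup ℝ) (D : DynSys S) (x y : D.X) : Prop :=
  ∀ U ∈ nhdsSet (Set.diagonal D.X), ∀ ε : ℝ, 0 < ε →
    ∃ s : S, (s : ℝ) < ε ∧ (D.T s x, D.T s y) ∈ U

/-- `A` is piecewise syndetic near zero. -/
def piecewiseSyndeticNearZero (S : AddSubsemigroup ℝ) (A : Set S) : Prop :=
  ∃ (F : ℕ → Finset S) (δ : ℕ → ℝ),
    (∀ n : ℕ, (F n).Nonempty ∧ (∀ t ∈ F n, (t : ℝ) < 1 / (n + 1)) ∧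
      0 < δ n ∧ δ n < 1 / (n + 1)) ∧
    ∀ G : Finset S, ∀ μ : ℝ, 0 < μ → ∃ x : S, (x : ℝ) < μ ∧
      ∀ n : ℕ, ∀ g ∈ G, (g : ℝ) < δ n → ∃ t ∈ F n, t + (g + x) ∈ A

/-- `A` is a J-set near zero. -/
def JSetNearZero (S : AddSubsemigroup ℝ) (A : Set S) : Prop :=
  ∀ F : Finset (ℕ → S), F.Nonempty →
    (∀ f ∈ F, Tendsto (fun n => ((f n : S) : ℝ)) atTop (nhds 0)) →
    ∀ δ : ℝ, 0 < δ → ∃ a : S, (a : ℝ) < δ ∧ ∃ H : Finset ℕ, H.Nonempty ∧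
      ∀ f ∈ F, ∃ b ∈ A, (b : ℝ) = (a : ℝ) + ∑ t ∈ H, ((f t : S) : ℝ)

def J0 (S : AddSubsemigroup ℝ) : Set (Ultrafilter S) :=
  {p | p ∈ Oplus S ∧ ∀ A ∈ p, JSetNearZero S A}

/-- jointly intermittently uniformly recurrent near zero. -/
def JIUR0 (S : AddSubsemigroup ℝ) (D : DynSys S) (x y : D.X) : Prop :=
  ∀ U ∈ nhds y, piecewiseSyndeticNearZero S {s : S | D.T s x ∈ U ∧ D.T s y ∈ U}

/-- jointly intermittently almost uniformly recurrent near zero. -/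
def JIAUR0 (S : AddSubsemigroup ℝ) (D : DynSys S) (x y : D.X) : Prop :=
  ∀ U ∈ nhds y, JSetNearZero S {s : S | D.T s x ∈ U ∧ D.T s y ∈ U}
section AuxLemmas

variable {S : AddSubsemigroup ℝ}

lemma mem_S_sum {ι : Type*} (H : Finset ι) (hne : H.Nonempty)
    (v : ι → ℝ) (hv : ∀ i ∈ H, v i ∈ S) : ∑ i ∈ H, v i ∈ S := by
  induction hne using Finset.Nonempty.cons_induction with
  | singleton i => simpa using hv i (by simp)
  | cons i s hi hs ih =>
      rw [Finset.sum_cons]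
      exact S.add_mem (hv i (by simp)) (ih fun j hj => hv j (by simp [hj]))

lemma exists_mem_lt (hdense : Set.Ioi (0 : ℝ) ⊆ closure (S : Set ℝ))
    {ε : ℝ} (hε : 0 < ε) : ∃ a : S, (a : ℝ) < ε := by
  have h : (ε / 2) ∈ closure (S : Set ℝ) := hdense (by simpa using half_pos hε)
  rw [Metric.mem_closure_iff] at h
  obtain ⟨b, hbS, hb⟩ := h (ε / 2) (half_pos hε)
  rw [Real.dist_eq, abs_lt] at hb
  exact ⟨⟨b, hbS⟩, by simpa using by linarith [hb.1, hb.2]⟩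

lemma exists_null_seq (hpos : ∀ x : ℝ, x ∈ S → 0 < x)
    (hdense : Set.Ioi (0 : ℝ) ⊆ closure (S : Set ℝ))
    (ε : ℕ → ℝ) (hε : ∀ n, 0 < ε n) :
    ∃ f : ℕ → S, (∀ n, ((f n : S) : ℝ) < ε n) ∧
      Filter.Tendsto (fun n => ((f n : S) : ℝ)) Filter.atTop (nhds 0) := by
  have h : ∀ n : ℕ, ∃ a : S, (a : ℝ) < min (ε n) ((1/2 : ℝ) ^ n) :=
    fun n => exists_mem_lt hdense (lt_min (hε n) (by positivity))
  choose f hf using h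
  refine ⟨f, fun n => (hf n).trans_le (min_le_left _ _), ?_⟩
  refine squeeze_zero (fun n => (hpos _ (f n).2).le)
    (fun n => ((hf n).trans_le (min_le_right _ _)).le) ?_
  exact tendsto_pow_atTop_nhds_zero_of_lt_one (by norm_num) (by norm_num)

lemma jset_mono {A B : Set S} (hAB : A ⊆ B) (h : JSetNearZero S A) :
    JSetNearZero S B := by
  intro F hFne hFnull δ hδ
  obtain ⟨a, ha, H, hH, hw⟩ := h F hFne hFnull δ hδ
  exact ⟨a, ha, H, hH, fun f hf => by
    obtain ⟨b, hb, he⟩ := hw f hf; exact ⟨b, hAB hb, he⟩⟩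

lemma sum_halfpow_le {δ : ℝ} (hδ : 0 ≤ δ) (M : Finset ℕ) :
    ∑ m ∈ M, δ / 2 ^ (m + 2) ≤ δ / 2 := by
  have h1 : ∑ m ∈ M, δ / 2 ^ (m + 2)
      ≤ ∑ m ∈ Finset.range (M.sup id + 1), δ / 2 ^ (m + 2) := by
    refine Finset.sum_le_sum_of_subset_of_nonneg
      (fun m hm => Finset.mem_range.2 (Nat.lt_succ_of_le (Finset.le_sup (f := id) hm)))
      (fun i _ _ => by positivity)
  have h2 : ∀ m : ℕ, δ / 2 ^ (m + 2) = (δ / 4) * (1/2 : ℝ) ^ m := by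
    intro m
    rw [div_pow, one_pow, pow_add]
    ring
  calc ∑ m ∈ M, δ / 2 ^ (m + 2)
      ≤ ∑ m ∈ Finset.range (M.sup id + 1), δ / 2 ^ (m + 2) := h1
    _ = (δ / 4) * ∑ m ∈ Finset.range (M.sup id + 1), (1/2 : ℝ) ^ m := by
        rw [Finset.mul_sum]; exact Finset.sum_congr rfl fun m _ => h2 m
    _ ≤ (δ / 4) * 2 := by
        refine mul_le_mul_of_nonneg_left (sum_geometric_two_le _) (by positivity)
    _ = δ / 2 := by ring

lemma jset_small (hpos : ∀ x : ℝ, x ∈ S → 0 < x)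
    (hdense : Set.Ioi (0 : ℝ) ⊆ closure (S : Set ℝ))
    {A : Set S} (h : JSetNearZero S A) {ε : ℝ} (hε : 0 < ε) :
    ∃ s ∈ A, (s : ℝ) < ε := by
  obtain ⟨f, hf, hfnull⟩ := exists_null_seq hpos hdense
    (fun n => ε / 2 ^ (n + 2)) (fun n => by positivity)
  obtain ⟨a, ha, H, hHne, hw⟩ := h {f} (by simp) (by simpa) (ε / 2) (half_pos hε)
  obtain ⟨b, hbA, hbe⟩ := hw f (by simp)
  refine ⟨b, hbA, ?_⟩
  rw [hbe]
  have h1 : ∑ t ∈ H, ((f t : S) : ℝ) ≤ ∑ t ∈ H, ε / 2 ^ (t + 2) :=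
    Finset.sum_le_sum fun t _ => (hf t).le
  have h2 := sum_halfpow_le hε.le H
  linarith

lemma jset_univ (hdense : Set.Ioi (0 : ℝ) ⊆ closure (S : Set ℝ)) :
    JSetNearZero S Set.univ := by
  intro F hFne hFnull δ hδ
  obtain ⟨a, ha⟩ := exists_mem_lt hdense hδ
  refine ⟨a, ha, {0}, by simp, fun f hf => ?_⟩
  refine ⟨⟨(a : ℝ) + ∑ t ∈ ({0} : Finset ℕ), ((f t : S) : ℝ), ?_⟩, trivial, rfl⟩
  simp only [Finset.sum_singleton]
  exact S.add_mem a.2 (f 0).2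

lemma not_jset_empty (hpos : ∀ x : ℝ, x ∈ S → 0 < x)
    (hdense : Set.Ioi (0 : ℝ) ⊆ closure (S : Set ℝ)) :
    ¬ JSetNearZero S (∅ : Set S) := by
  intro h
  obtain ⟨s, hs, -⟩ := jset_small hpos hdense h one_pos
  exact hs

end AuxLemmas
section PartitionRegularity

variable {S : AddSubsemigroup ℝ}

lemma exists_subseq (F : Finset (ℕ → S))
    (hFnull : ∀ f ∈ F, Filter.Tendsto (fun n => ((f n : S) : ℝ)) Filter.atTop (nhds 0))
    (ε : ℕ → ℝ) (hε : ∀ m, 0 < ε m) :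
    ∃ σ : ℕ → ℕ, StrictMono σ ∧ ∀ m, ∀ f ∈ F, ((f (σ m) : S) : ℝ) < ε m := by
  have key : ∀ m : ℕ, ∃ N : ℕ, ∀ k ≥ N, ∀ f ∈ F, ((f k : S) : ℝ) < ε m := by
    intro m
    have h : ∀ᶠ k in Filter.atTop, ∀ f ∈ F, ((f k : S) : ℝ) < ε m := by
      rw [Filter.eventually_all_finset]
      intro f hf
      exact (hFnull f hf).eventually_lt_const (hε m)
    exact Filter.eventually_atTop.1 h
  choose N hN using key
  refine ⟨fun m => m + ∑ j ∈ Finset.range (m + 1), N j, ?_, ?_⟩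
  · apply strictMono_nat_of_lt_succ
    intro m
    show m + ∑ j ∈ Finset.range (m + 1), N j < (m + 1) + ∑ j ∈ Finset.range (m + 1 + 1), N j
    have h1 : ∑ j ∈ Finset.range (m + 1), N j ≤ ∑ j ∈ Finset.range (m + 1 + 1), N j :=
      Finset.sum_le_sum_of_subset (Finset.range_subset_range.2 (by omega))
    omega
  · intro m f hf
    refine hN m _ ?_ f hf
    show N m ≤ m + ∑ j ∈ Finset.range (m + 1), N j
    have h1 : N m ≤ ∑ j ∈ Finset.range (m + 1), N j :=
      Finset.single_le_sum (fun j _ => Nat.zero_le _) (Finset.self_mem_range_succ m)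
    omega

lemma hits_or_hits (hpos : ∀ x : ℝ, x ∈ S → 0 < x)
    {A B : Set S} (h : JSetNearZero S (A ∪ B))
    (F : Finset (ℕ → S)) (hFne : F.Nonempty)
    (hFnull : ∀ f ∈ F, Filter.Tendsto (fun n => ((f n : S) : ℝ)) Filter.atTop (nhds 0))
    {δ : ℝ} (hδ : 0 < δ) :
    (∃ a : S, (a : ℝ) < δ ∧ ∃ H : Finset ℕ, H.Nonempty ∧
      ∀ f ∈ F, ∃ b ∈ A, (b : ℝ) = (a : ℝ) + ∑ t ∈ H, ((f t : S) : ℝ)) ∨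
    (∃ a : S, (a : ℝ) < δ ∧ ∃ H : Finset ℕ, H.Nonempty ∧
      ∀ f ∈ F, ∃ b ∈ B, (b : ℝ) = (a : ℝ) + ∑ t ∈ H, ((f t : S) : ℝ)) := by
  classical
  obtain ⟨ι, ιfin, hHJ⟩ :=
    Combinatorics.Line.exists_mono_in_high_dimension {f // f ∈ F} Bool
  set α := {f // f ∈ F} with hα
  haveI := ιfin
  haveI : Nonempty α := by
    obtain ⟨f, hf⟩ := hFne; exact ⟨⟨f, hf⟩⟩
  obtain ⟨l₀, -⟩ := hHJ fun _ => true
  obtain ⟨i₀, -⟩ := l₀.proper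
  haveI : Nonempty ι := ⟨i₀⟩
  set n := Fintype.card ι with hn
  have hnpos : 0 < n := Fintype.card_pos
  set e : ι ≃ Fin n := Fintype.equivFin ι with he
  obtain ⟨σ, hσmono, hσ⟩ := exists_subseq F hFnull (fun m => δ / 2 ^ (m + 2))
    (fun m => by positivity)
  set idx : ℕ → ι → ℕ := fun t i => σ (t * n + (e i : ℕ)) with hidx
  have code_inj : ∀ {t₁ t₂ : ℕ} {i₁ i₂ : ι},
      t₁ * n + (e i₁ : ℕ) = t₂ * n + (e i₂ : ℕ) → t₁ = t₂ ∧ i₁ = i₂ := by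
    intro t₁ t₂ i₁ i₂ h1
    have hr : (e i₁ : ℕ) = (e i₂ : ℕ) := by
      have := congrArg (· % n) h1
      simpa [Nat.mul_add_mod', Nat.mod_eq_of_lt (e i₁).isLt,
        Nat.mod_eq_of_lt (e i₂).isLt] using this
    have ht : t₁ = t₂ := by
      have : t₁ * n = t₂ * n := by omega
      exact Nat.eq_of_mul_eq_mul_right hnpos this
    refine ⟨ht, e.injective (Fin.ext hr)⟩
  have idx_inj : ∀ {t₁ t₂ : ℕ} {i₁ i₂ : ι},
      idx t₁ i₁ = idx t₂ i₂ → t₁ = t₂ ∧ i₁ = i₂ :=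
    fun h => code_inj (hσmono.injective h)
  have memg : ∀ (w : ι → α) (t : ℕ),
      (∑ i : ι, (((w i).1 (idx t i) : S) : ℝ)) ∈ S := fun w t =>
    mem_S_sum Finset.univ Finset.univ_nonempty _ fun i _ => ((w i).1 (idx t i)).2
  set g : (ι → α) → ℕ → S := fun w t => ⟨_, memg w t⟩ with hg
  have gcoe : ∀ w t, ((g w t : S) : ℝ) = ∑ i : ι, (((w i).1 (idx t i) : S) : ℝ) :=
    fun _ _ => rfl
  have fval_lt : ∀ (j : α) (t : ℕ) (i : ι),
      ((j.1 (idx t i) : S) : ℝ) < δ / 2 ^ ((t * n + (e i : ℕ)) + 2) :=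
    fun j t i => hσ _ j.1 j.2
  have bound_mono : ∀ (t : ℕ) (i : ι), δ / 2 ^ ((t * n + (e i : ℕ)) + 2) ≤ δ / 2 ^ (t + 2) := by
    intro t i
    apply div_le_div_of_nonneg_left hδ.le (by positivity)
    have h1 : t ≤ t * n + (e i : ℕ) :=
      le_trans (Nat.le_mul_of_pos_right t hnpos) (Nat.le_add_right _ _)
    exact pow_le_pow_right₀ one_le_two (by omega)
  have gnull : ∀ w, Filter.Tendsto (fun t => ((g w t : S) : ℝ)) Filter.atTop (nhds 0) := by
    intro w
    refine squeeze_zero (fun t => (hpos _ (g w t).2).le)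
      (g := fun t => (n * (δ / 4)) * (1/2 : ℝ) ^ t) (fun t => ?_) ?_
    · rw [gcoe]
      calc ∑ i : ι, (((w i).1 (idx t i) : S) : ℝ)
          ≤ ∑ _i : ι, δ / 2 ^ (t + 2) :=
            Finset.sum_le_sum fun i _ => le_trans (fval_lt (w i) t i).le (bound_mono t i)
        _ = n * (δ / 2 ^ (t + 2)) := by
            rw [Finset.sum_const, Finset.card_univ, nsmul_eq_mul]
        _ = (n * (δ / 4)) * (1/2 : ℝ) ^ t := by
            rw [div_pow, one_pow, pow_add]; ring
    · simpa using (tendsto_pow_atTop_nhds_zero_of_lt_one (r := (1/2 : ℝ)) (by norm_num)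
        (by norm_num)).const_mul ((n : ℝ) * (δ / 4))
  set G : Finset (ℕ → S) := Finset.image g Finset.univ with hG
  have hGne : G.Nonempty :=
    Finset.Nonempty.image Finset.univ_nonempty g
  have hGnull : ∀ g' ∈ G, Filter.Tendsto (fun n => ((g' n : S) : ℝ)) Filter.atTop (nhds 0) := by
    intro g' hg'
    obtain ⟨w, -, rfl⟩ := Finset.mem_image.1 hg'
    exact gnull w
  obtain ⟨a, ha, H, hHne, hw⟩ := h G hGne hGnull (δ / 2) (half_pos hδ)
  choose b hbmem hbeq using fun w : ι → α =>
    hw (g w) (Finset.mem_image_of_mem g (Finset.mem_univ w))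
  obtain ⟨l, c, hc⟩ := hHJ fun w => decide (b w ∈ A)
  obtain ⟨i₁, hi₁⟩ := l.proper
  set Mv : Finset ι := Finset.univ.filter (fun i => l.idxFun i = none) with hMv
  have hMvne : Mv.Nonempty := ⟨i₁, by simp [hMv, hi₁]⟩
  set Fx : Finset ι := Finset.univ.filter (fun i => ¬ l.idxFun i = none) with hFx
  set j₀ : α := Classical.arbitrary α with hj₀
  set w₀ : ι → α := fun i => (l.idxFun i).getD j₀ with hw₀
  have hline : ∀ (j : α) (i : ι),
      (l j) i = if l.idxFun i = none then j else w₀ i := by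
    intro j i
    cases hcase : l.idxFun i <;>
      simp [Combinatorics.Line.coe_apply, hcase, hw₀]
  set cfix : ℝ := ∑ p ∈ H ×ˢ Fx, (((w₀ p.2).1 (idx p.1 p.2) : S) : ℝ) with hcfix
  set H' : Finset ℕ := (H ×ˢ Mv).image (fun p => idx p.1 p.2) with hH'
  have hH'ne : H'.Nonempty := (hHne.product hMvne).image _
  have prod_inj : ∀ p ∈ H ×ˢ Mv, ∀ q ∈ H ×ˢ Mv,
      idx p.1 p.2 = idx q.1 q.2 → p = q := by
    intro p _ q _ hpq
    obtain ⟨h1, h2⟩ := idx_inj hpq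
    exact Prod.ext h1 h2
  have keyeq : ∀ j : α, ((b (l j) : S) : ℝ)
      = ((a : ℝ) + cfix) + ∑ u ∈ H', ((j.1 u : S) : ℝ) := by
    intro j
    rw [hbeq (l j)]
    have expand : ∀ t : ℕ, ((g (l j) t : S) : ℝ)
        = (∑ i ∈ Mv, ((j.1 (idx t i) : S) : ℝ))
          + ∑ i ∈ Fx, (((w₀ i).1 (idx t i) : S) : ℝ) := by
      intro t
      rw [gcoe, ← Finset.sum_filter_add_sum_filter_not Finset.univ
        (fun i => l.idxFun i = none)]
      congr 1
      · refine Finset.sum_congr rfl fun i hi => ?_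
        rw [hline j i, if_pos (by simpa [hMv] using hi)]
      · refine Finset.sum_congr rfl fun i hi => ?_
        rw [hline j i, if_neg (by simpa [hFx] using hi)]
    rw [Finset.sum_congr rfl fun t _ => expand t, Finset.sum_add_distrib]
    have hmv : ∑ t ∈ H, ∑ i ∈ Mv, ((j.1 (idx t i) : S) : ℝ)
        = ∑ u ∈ H', ((j.1 u : S) : ℝ) := by
      rw [hH', Finset.sum_image prod_inj, Finset.sum_product]
    have hfx : ∑ t ∈ H, ∑ i ∈ Fx, (((w₀ i).1 (idx t i) : S) : ℝ) = cfix := by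
      rw [hcfix, Finset.sum_product]
    rw [hmv, hfx]
    ring
  have cfix_nonneg : 0 ≤ cfix :=
    Finset.sum_nonneg fun p _ => (hpos _ ((w₀ p.2).1 (idx p.1 p.2)).2).le
  have cfix_le : cfix ≤ δ / 2 := by
    have prodfx_inj : ∀ p ∈ H ×ˢ Fx, ∀ q ∈ H ×ˢ Fx,
        p.1 * n + (e p.2 : ℕ) = q.1 * n + (e q.2 : ℕ) → p = q := by
      intro p _ q _ hpq
      obtain ⟨h1, h2⟩ := code_inj hpq
      exact Prod.ext h1 h2
    calc cfix ≤ ∑ p ∈ H ×ˢ Fx, δ / 2 ^ ((p.1 * n + (e p.2 : ℕ)) + 2) :=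
          Finset.sum_le_sum fun p _ => (fval_lt (w₀ p.2) p.1 p.2).le
      _ = ∑ m ∈ (H ×ˢ Fx).image (fun p => p.1 * n + (e p.2 : ℕ)), δ / 2 ^ (m + 2) :=
          (Finset.sum_image (f := fun m => δ / 2 ^ (m + 2)) prodfx_inj).symm
      _ ≤ δ / 2 := sum_halfpow_le hδ.le _
  have haS : ((a : ℝ) + cfix) ∈ S := by
    rcases Finset.eq_empty_or_nonempty (H ×ˢ Fx) with hE | hNE
    · have : cfix = 0 := by rw [hcfix, hE, Finset.sum_empty]
      rw [this, add_zero]; exact a.2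
    · exact S.add_mem a.2 (mem_S_sum _ hNE _ fun p _ => ((w₀ p.2).1 (idx p.1 p.2)).2)
  have hmem : ∀ j : α, b (l j) ∈ (if c then A else B) := by
    intro j
    have hcj := hc j
    cases c with
    | true =>
        simp only [if_true]
        exact of_decide_eq_true hcj
    | false =>
        simp only [Bool.false_eq_true, if_false]
        have : ¬ b (l j) ∈ A := of_decide_eq_false hcj
        rcases hbmem (l j) with hA' | hB'
        · exact absurd hA' this
        · exact hB'
  have main : ∃ a' : S, (a' : ℝ) < δ ∧ ∃ H'' : Finset ℕ, H''.Nonempty ∧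
      ∀ f ∈ F, ∃ b' ∈ (if c then A else B),
        (b' : ℝ) = (a' : ℝ) + ∑ t ∈ H'', ((f t : S) : ℝ) := by
    refine ⟨⟨(a : ℝ) + cfix, haS⟩, by simpa using by linarith, H', hH'ne, ?_⟩
    intro f hf
    exact ⟨b (l ⟨f, hf⟩), hmem ⟨f, hf⟩, keyeq ⟨f, hf⟩⟩
  obtain ⟨a', ha', H'', hH''ne, hfin⟩ := main
  cases c with
  | true => exact Or.inl ⟨a', ha', H'', hH''ne, by simpa using hfin⟩
  | false => exact Or.inr ⟨a', ha', H'', hH''ne, by simpa using hfin⟩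

lemma jset_union (hpos : ∀ x : ℝ, x ∈ S → 0 < x)
    {A B : Set S} (h : JSetNearZero S (A ∪ B)) :
    JSetNearZero S A ∨ JSetNearZero S B := by
  classical
  by_contra hcon
  push_neg at hcon
  obtain ⟨hA, hB⟩ := hcon
  simp only [JSetNearZero, not_forall] at hA hB
  obtain ⟨FA, hFAne, hFAnull, δA, hδA, hA⟩ := hA
  obtain ⟨FB, hFBne, hFBnull, δB, hδB, hB⟩ := hB
  push_neg at hA hB
  have hδ : 0 < min δA δB := lt_min hδA hδB
  have hnull : ∀ f ∈ FA ∪ FB,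
      Filter.Tendsto (fun n => ((f n : S) : ℝ)) Filter.atTop (nhds 0) := by
    intro f hf
    rcases Finset.mem_union.1 hf with hf | hf
    · exact hFAnull f hf
    · exact hFBnull f hf
  rcases hits_or_hits hpos h (FA ∪ FB) (hFAne.mono Finset.subset_union_left)
      hnull hδ with ⟨a, ha, H, hHne, hw⟩ | ⟨a, ha, H, hHne, hw⟩
  · obtain ⟨f, hf, hfne⟩ := hA a (lt_of_lt_of_le ha (min_le_left _ _)) H hHne
    obtain ⟨b, hbA, hbe⟩ := hw f (Finset.mem_union_left _ hf)
    exact hfne b hbA hbe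
  · obtain ⟨f, hf, hfne⟩ := hB a (lt_of_lt_of_le ha (min_le_right _ _)) H hHne
    obtain ⟨b, hbB, hbe⟩ := hw f (Finset.mem_union_right _ hf)
    exact hfne b hbB hbe

end PartitionRegularity
section UltrafilterAlgebra

lemma mem_uadd {α : Type} [Add α] {p q : Ultrafilter α} {A : Set α} :
    A ∈ uadd p q ↔ {a | {t | a + t ∈ A} ∈ q} ∈ p := by
  change A ∈ Filter.bind ↑p (fun a => ↑(Ultrafilter.map (a + ·) q)) ↔ _
  rw [Filter.mem_bind']
  rfl

lemma uadd_assoc {α : Type} [AddSemigroup α] (p q r : Ultrafilter α) :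
    uadd (uadd p q) r = uadd p (uadd q r) := by
  ext A
  simp only [mem_uadd, Set.mem_setOf_eq, add_assoc]

lemma uadd_continuous {α : Type} [Add α] (q : Ultrafilter α) :
    Continuous (fun p : Ultrafilter α => uadd p q) := by
  rw [ultrafilterBasis_is_basis.continuous_iff]
  rintro s ⟨B, rfl⟩
  have : (fun p : Ultrafilter α => uadd p q) ⁻¹' {u | B ∈ u}
      = {u : Ultrafilter α | {a | {t | a + t ∈ B} ∈ q} ∈ u} := by
    ext p
    simp [Set.mem_preimage, mem_uadd]
  rw [this]
  exact ultrafilter_isOpen_basic _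

variable {S : AddSubsemigroup ℝ}

lemma oplus_uadd {p q : Ultrafilter S} (hp : p ∈ Oplus S) (hq : q ∈ Oplus S) :
    uadd p q ∈ Oplus S := by
  intro ε hε
  rw [mem_uadd]
  refine Filter.mem_of_superset (hp (ε / 2) (half_pos hε)) ?_
  intro a ha
  refine Filter.mem_of_superset (hq (ε / 2) (half_pos hε)) ?_
  intro t ht
  have ha' : (a : ℝ) < ε / 2 := ha
  have ht' : (t : ℝ) < ε / 2 := ht
  show ((a + t : S) : ℝ) < ε
  have hco : ((a + t : S) : ℝ) = (a : ℝ) + (t : ℝ) := rfl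
  rw [hco]
  linarith

lemma j0_uadd {p q : Ultrafilter S} (hp : p ∈ J0 S) (hq : q ∈ J0 S) :
    uadd p q ∈ J0 S := by
  refine ⟨oplus_uadd hp.1 hq.1, ?_⟩
  intro D hD
  rw [mem_uadd] at hD
  have hE : JSetNearZero S {a : S | {t : S | a + t ∈ D} ∈ q} := hp.2 _ hD
  intro F hFne hFnull δ hδ
  obtain ⟨a, ha, H, hHne, hw⟩ := hE F hFne hFnull (δ / 2) (half_pos hδ)
  classical
  choose b hbE hbeq using hw
  set b' : (ℕ → S) → S := fun f => if h : f ∈ F then b f h else a with hb'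
  have hb'E : ∀ f ∈ F, b' f ∈ {a : S | {t : S | a + t ∈ D} ∈ q} := by
    intro f hf; rw [hb']; simp only [dif_pos hf]; exact hbE f hf
  have hb'eq : ∀ f ∈ F, ((b' f : S) : ℝ) = (a : ℝ) + ∑ t ∈ H, ((f t : S) : ℝ) := by
    intro f hf; rw [hb']; simp only [dif_pos hf]; exact hbeq f hf
  have hsets : ({t : S | (t : ℝ) < δ / 2} ∩ ⋂ f ∈ F, {t : S | b' f + t ∈ D}) ∈ q := by
    refine Filter.inter_mem (hq.1 (δ / 2) (half_pos hδ)) ?_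
    rw [Filter.biInter_finset_mem]
    intro f hf
    exact hb'E f hf
  obtain ⟨c, hc1, hc2⟩ := Ultrafilter.nonempty_of_mem hsets
  refine ⟨a + c, ?_, H, hHne, ?_⟩
  · have hco : ((a + c : S) : ℝ) = (a : ℝ) + (c : ℝ) := rfl
    have hc1' : (c : ℝ) < δ / 2 := hc1
    rw [hco]
    linarith
  · intro f hf
    refine ⟨b' f + c, ?_, ?_⟩
    · simp only [Set.mem_iInter] at hc2
      exact hc2 f hf
    · have h1 : ((b' f + c : S) : ℝ) = ((b' f : S) : ℝ) + (c : ℝ) := rfl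
      have h2 : ((a + c : S) : ℝ) = (a : ℝ) + (c : ℝ) := rfl
      rw [h1, h2, hb'eq f hf]
      ring

end UltrafilterAlgebra

section Dynamics

variable {σ : Type} [Add σ]

lemma tp_le (D : DynSys σ) (p : Ultrafilter σ) (z : D.X) :
    ↑(p.map fun s => D.T s z) ≤ nhds (D.Tp p z) :=
  Ultrafilter.le_nhds_lim _

lemma mem_of_tp (D : DynSys σ) (p : Ultrafilter σ) (z : D.X) {V : Set D.X}
    (hV : V ∈ nhds (D.Tp p z)) : {s | D.T s z ∈ V} ∈ p := by
  have h := tp_le D p z hV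
  rwa [Ultrafilter.mem_coe, Ultrafilter.mem_map] at h

lemma tp_uadd (D : DynSys σ) (p q : Ultrafilter σ) (z : D.X) :
    D.Tp (uadd p q) z = D.Tp p (D.Tp q z) := by
  symm
  refine Ultrafilter.lim_eq_iff_le_nhds.mpr ?_
  refine (closed_nhds_basis (D.Tp (uadd p q) z)).ge_iff.mpr ?_
  rintro V ⟨hVnhds, hVclosed⟩
  rw [Ultrafilter.mem_coe, Ultrafilter.mem_map]
  have h1 : {u | D.T u z ∈ V} ∈ uadd p q := mem_of_tp D _ z hVnhds
  rw [mem_uadd] at h1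
  refine Filter.mem_of_superset h1 ?_
  intro a hamem
  simp only [Set.mem_setOf_eq] at hamem ⊢
  have htend : Filter.Tendsto (fun t => D.T a (D.T t z)) ↑q (nhds (D.T a (D.Tp q z))) := by
    have h2 : Filter.Tendsto (fun t => D.T t z) ↑q (nhds (D.Tp q z)) := by
      have := tp_le D q z
      rwa [Filter.Tendsto, ← Ultrafilter.coe_map]
    exact ((D.cont a).tendsto _).comp h2
  have hev : ∀ᶠ t in ↑q, D.T a (D.T t z) ∈ V := by
    refine Filter.mem_of_superset hamem ?_
    intro t ht
    simp only [Set.mem_setOf_eq] at ht ⊢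
    have := congrFun (D.comp a t) z
    simp only [Function.comp_apply] at this
    rwa [this]
  exact hVclosed.mem_of_tendsto htend hev

end Dynamics
theorem stmt15 (S : AddSubsemigroup ℝ)
    (hpos : ∀ x : ℝ, x ∈ S → 0 < x)
    (hdense : Set.Ioi (0 : ℝ) ⊆ closure (S : Set ℝ))
    (A : Set S) :
    (∃ p ∈ J0 S, uadd p p = p ∧ A ∈ p) ↔
      ∃ (D : DynSys S) (x y : D.X), JIAUR0 S D x y ∧
        ∃ U ∈ nhds y, A = {s : S | D.T s x ∈ U} := by
  constructor
  · -- forward direction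
    rintro ⟨p, hpJ0, hidem, hA⟩
    classical
    set D : DynSys S :=
      { X := Option S → Bool
        T := fun s z c => z (some (c.elim s fun u => s + u))
        cont := fun s => continuous_pi fun c => continuous_apply _
        comp := by
          intro s t
          funext z c
          cases c with
          | none =>
              show z (some (t + s)) = z (some (s + t))
              rw [add_comm]
          | some u =>
              show z (some (t + (s + u))) = z (some (s + t + u))
              rw [← add_assoc, add_comm t s] } with hD
    set x : D.X := fun c => c.elim false fun u => if u ∈ A then true else false with hx
    set y : D.X := D.Tp p x with hy
    set U : Set D.X := {z | z none = true} with hU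
    have hUopen : IsOpen U :=
      (continuous_apply (A := fun _ : Option S => Bool) none).isOpen_preimage {true}
        (isOpen_discrete _)
    have hTsx : ∀ s : S, D.T s x ∈ U ↔ s ∈ A := by
      intro s
      show (x (some s) = true) ↔ s ∈ A
      by_cases h : s ∈ A <;> simp [hx, h]
    have hyU : y ∈ U := by
      by_contra hyU
      have hopen : IsOpen Uᶜ :=
        (continuous_apply (A := fun _ : Option S => Bool) none).isOpen_preimage ({true}ᶜ)
          (isOpen_discrete _)
      have hmem : Uᶜ ∈ nhds y := hopen.mem_nhds hyU
      have h1 : {s : S | D.T s x ∈ Uᶜ} ∈ p := mem_of_tp D p x (hy ▸ hmem)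
      have h2 : {s : S | D.T s x ∈ Uᶜ} = Aᶜ := by
        ext s
        simp only [Set.mem_setOf_eq, Set.mem_compl_iff]
        rw [not_iff_not.2 (hTsx s)]
      rw [h2] at h1
      exact Ultrafilter.compl_mem_iff_notMem.1 h1 hA
    have hTpy : D.Tp p y = y := by
      rw [hy, ← tp_uadd, hidem]
    have hJI : JIAUR0 S D x y := by
      intro V hV
      refine hpJ0.2 _ ?_
      have h1 : {s : S | D.T s x ∈ V} ∈ p := mem_of_tp D p x (hy ▸ hV)
      have h2 : {s : S | D.T s y ∈ V} ∈ p := by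
        refine mem_of_tp D p y ?_
        rw [hTpy]
        exact hV
      have h3 : {s : S | D.T s x ∈ V ∧ D.T s y ∈ V}
          = {s : S | D.T s x ∈ V} ∩ {s : S | D.T s y ∈ V} := rfl
      rw [h3]
      exact Filter.inter_mem h1 h2
    exact ⟨D, x, y, hJI, U, hUopen.mem_nhds hyU, by ext s; exact (hTsx s).symm⟩
  · -- reverse direction
    rintro ⟨D, x, y, hJI, U, hU, hAeq⟩
    classical
    set BU : Set D.X → Set S := fun V => {s : S | D.T s x ∈ V ∧ D.T s y ∈ V} with hBU
    have hBJ : ∀ V ∈ nhds y, JSetNearZero S (BU V) := fun V hV => hJI V hV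
    have hBUmono : ∀ {V W : Set D.X}, V ⊆ W → BU V ⊆ BU W :=
      fun hVW s hs => ⟨hVW hs.1, hVW hs.2⟩
    set KF : Filter S :=
      { sets := {C : Set S | ¬ JSetNearZero S Cᶜ}
        univ_sets := by
          simp only [Set.mem_setOf_eq, Set.compl_univ]
          exact not_jset_empty hpos hdense
        sets_of_superset := by
          intro C C' hC hsub hJ
          exact hC (jset_mono (Set.compl_subset_compl.2 hsub) hJ)
        inter_sets := by
          intro C C' hC hC' hJ
          rw [Set.compl_inter] at hJ
          rcases jset_union hpos hJ with h | h
          exacts [hC h, hC' h] } with hKF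
    have hKFmem : ∀ C : Set S, C ∈ KF ↔ ¬ JSetNearZero S Cᶜ := fun C => Iff.rfl
    have hdir : DirectedOn ((fun V => Filter.principal (BU V)) ⁻¹'o GE.ge)
        {V : Set D.X | V ∈ nhds y} := by
      intro V hV W hW
      refine ⟨V ∩ W, Filter.inter_mem hV hW, ?_, ?_⟩
      · exact Filter.principal_mono.2 (hBUmono Set.inter_subset_left)
      · exact Filter.principal_mono.2 (hBUmono Set.inter_subset_right)
    set G : Filter S := ⨅ V ∈ {V : Set D.X | V ∈ nhds y}, Filter.principal (BU V) with hG
    have hGmem : ∀ t : Set S, t ∈ G ↔ ∃ V ∈ nhds y, BU V ⊆ t := by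
      intro t
      rw [hG, Filter.mem_biInf_of_directed hdir ⟨Set.univ, Filter.univ_mem⟩]
      simp only [Filter.mem_principal, Set.mem_setOf_eq]
    have hBUG : ∀ V ∈ nhds y, BU V ∈ G := fun V hV => (hGmem _).2 ⟨V, hV, subset_rfl⟩
    have hne : Filter.NeBot (KF ⊓ G) := by
      rw [Filter.inf_neBot_iff]
      intro s hs t ht
      obtain ⟨V, hV, hVsub⟩ := (hGmem t).1 ht
      by_contra hempty
      rw [Set.not_nonempty_iff_eq_empty] at hempty
      have hsub2 : BU V ⊆ sᶜ := fun z hz hzs =>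
        Set.eq_empty_iff_forall_notMem.1 hempty z ⟨hzs, hVsub hz⟩
      exact hs (jset_mono hsub2 (hBJ V hV))
    obtain ⟨p, hp⟩ := Ultrafilter.exists_le (KF ⊓ G)
    have hpK : ∀ C ∈ KF, C ∈ p := fun C hC => hp (Filter.mem_inf_of_left hC)
    have hpG : ∀ V ∈ nhds y, BU V ∈ p := fun V hV =>
      hp (Filter.mem_inf_of_right (hBUG V hV))
    have hJ0ofK : ∀ r : Ultrafilter S, (∀ C ∈ KF, C ∈ r) → r ∈ J0 S := by
      intro r hr
      constructor
      · intro ε hε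
        refine hr _ ?_
        rw [hKFmem]
        intro hJ
        obtain ⟨s, hs, hslt⟩ := jset_small hpos hdense hJ hε
        exact hs hslt
      · intro B hB
        by_contra hJB
        have hc : Bᶜ ∈ r := by
          refine hr _ ?_
          rw [hKFmem, compl_compl]
          exact hJB
        exact Ultrafilter.compl_mem_iff_notMem.1 hc hB
    set M : Set (Ultrafilter S) := {r | r ∈ J0 S ∧ ∀ V ∈ nhds y, BU V ∈ r} with hM
    have hpM : p ∈ M := ⟨hJ0ofK p hpK, hpG⟩
    have hMadd : ∀ r ∈ M, ∀ r' ∈ M, uadd r r' ∈ M := by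
      intro r hr r' hr'
      refine ⟨j0_uadd hr.1 hr'.1, ?_⟩
      intro V hV
      obtain ⟨O, hOsub, hOopen, hyO⟩ := mem_nhds_iff.1 hV
      refine Filter.mem_of_superset ?_ (hBUmono hOsub)
      rw [Ultrafilter.mem_coe, mem_uadd]
      refine Filter.mem_of_superset (hr.2 O (hOopen.mem_nhds hyO)) ?_
      intro a ha
      have hWnhds : (D.T a) ⁻¹' O ∈ nhds y :=
        ((D.cont a).continuousAt).preimage_mem_nhds (hOopen.mem_nhds ha.2)
      refine Filter.mem_of_superset (hr'.2 _ hWnhds) ?_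
      intro t ht
      have hcx := congrFun (D.comp a t) x
      have hcy := congrFun (D.comp a t) y
      simp only [Function.comp_apply] at hcx hcy
      exact ⟨by rw [← hcx]; exact ht.1, by rw [← hcy]; exact ht.2⟩
    have hMclosed : IsClosed M := by
      have h1 : IsClosed {r : Ultrafilter S | r ∈ J0 S} := by
        have heq : {r : Ultrafilter S | r ∈ J0 S} =
            (⋂ (ε : ℝ) (_ : 0 < ε), {r : Ultrafilter S | {x : S | (x : ℝ) < ε} ∈ r}) ∩
            (⋂ (B : Set S) (_ : ¬ JSetNearZero S B), {r : Ultrafilter S | B ∈ r}ᶜ) := by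
          ext r
          simp only [Set.mem_setOf_eq, Set.mem_inter_iff, Set.mem_iInter, Set.mem_compl_iff]
          constructor
          · rintro ⟨h1, h2⟩
            exact ⟨fun ε hε => h1 ε hε, fun B hB hBr => hB (h2 B hBr)⟩
          · rintro ⟨h1, h2⟩
            refine ⟨h1, fun B hBr => ?_⟩
            by_contra hJB
            exact h2 B hJB hBr
        rw [heq]
        refine IsClosed.inter ?_ ?_
        · exact isClosed_iInter fun ε => isClosed_iInter fun _ =>
            ultrafilter_isClosed_basic _
        · exact isClosed_iInter fun B => isClosed_iInter fun _ =>
            (ultrafilter_isOpen_basic _).isClosed_compl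
      have h2 : IsClosed {r : Ultrafilter S | ∀ V ∈ nhds y, BU V ∈ r} := by
        have heq : {r : Ultrafilter S | ∀ V ∈ nhds y, BU V ∈ r}
            = ⋂ (V : Set D.X) (_ : V ∈ nhds y), {r : Ultrafilter S | BU V ∈ r} := by
          ext r; simp only [Set.mem_setOf_eq, Set.mem_iInter]
        rw [heq]
        exact isClosed_iInter fun V => isClosed_iInter fun _ =>
          ultrafilter_isClosed_basic _
      exact IsClosed.inter h1 h2
    haveI : Nonempty M := ⟨⟨p, hpM⟩⟩
    haveI : CompactSpace M := isCompact_iff_compactSpace.1 hMclosed.isCompact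
    letI : Semigroup M :=
      { mul := fun r r' => ⟨uadd r.1 r'.1, hMadd _ r.2 _ r'.2⟩
        mul_assoc := fun a b c => Subtype.ext (uadd_assoc a.1 b.1 c.1) }
    have hcont : ∀ r : M, Continuous (· * r) := fun r =>
      ((uadd_continuous r.1).comp continuous_subtype_val).subtype_mk _
    obtain ⟨m, hm⟩ := exists_idempotent_of_compact_t2_of_continuous_mul_left hcont
    refine ⟨m.1, m.2.1, congrArg Subtype.val hm, ?_⟩
    refine Filter.mem_of_superset (m.2.2 U hU) ?_
    rw [hAeq]
    intro s hs
    exact hs.1
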